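/- In the ring S = 𝔽₂[a,w][u,u⁻¹] (Laurent in u, polynomial in a, w), the elements c = u·w and b = a·w + u·w² satisfy c² = a·c + u·b, and moreover every element in the 𝔽₂[a,u,u⁻¹]-subalgebra generated by c and b can be written uniquely as f(b) + c·g(b) with f, g ∈ 𝔽₂[a,u,u⁻¹][b]. -/

import Mathlib

noncomputable section

namespace Stmt5

/-- `S = 𝔽₂[a,w][u,u⁻¹]`. -/
abbrev S : Type := LaurentPolynomial (MvPolynomial (Fin 2) (ZMod 2))

def a : S := LaurentPolynomial.C (MvPolynomial.X 0)
def w : S := LaurentPolynomial.C (MvPolynomial.X 1)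
def u : S := LaurentPolynomial.T 1
def uinv : S := LaurentPolynomial.T (-1)

def c : S := u * w
def b : S := a * w + u * w ^ 2

/-- The coefficient subring `𝔽₂[a,u,u⁻¹] ⊆ S`. -/
def R₀ : Subalgebra (ZMod 2) S := Algebra.adjoin (ZMod 2) ({a, u, uinv} : Set S)

/-! ### Auxiliary constructions -/

abbrev A₀ : Type := LaurentPolynomial (Polynomial (ZMod 2))

instance : IsDomain A₀ := NoZeroDivisors.to_isDomain _

def a' : A₀ := LaurentPolynomial.C Polynomial.X

open Polynomial LaurentPolynomial

set_option maxHeartbeats 1000000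
set_option synthInstance.maxHeartbeats 400000

def γΦ : Multiplicative ℤ →* Polynomial A₀ where
  toFun n := Polynomial.C (LaurentPolynomial.T (Multiplicative.toAdd n))
  map_one' := show Polynomial.C (T (Multiplicative.toAdd (1 : Multiplicative ℤ))) = 1 by
    rw [toAdd_one, T_zero, Polynomial.C_1]
  map_mul' x y := show Polynomial.C (T (Multiplicative.toAdd (x * y))) = _ by
    rw [toAdd_mul, T_add, Polynomial.C_mul]

def βΦ : MvPolynomial (Fin 2) (ZMod 2) →+* Polynomial A₀ :=
  (MvPolynomial.aeval ![Polynomial.C a', Polynomial.C (LaurentPolynomial.T (-1)) * Polynomial.X]).toRingHom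

def Φ : S →+* Polynomial A₀ :=
  AddMonoidAlgebra.liftNCRingHom βΦ γΦ (fun x y => mul_comm (βΦ x) (γΦ y))

lemma Φ_single (n : ℤ) (r : MvPolynomial (Fin 2) (ZMod 2)) :
    Φ (AddMonoidAlgebra.single n r) = βΦ r * Polynomial.C (LaurentPolynomial.T n) := by
  classical
  exact AddMonoidAlgebra.liftNCRingHom_single _ _ _ n r

lemma Φ_a : Φ a = Polynomial.C a' := by
  rw [a, show (LaurentPolynomial.C (MvPolynomial.X 0 : MvPolynomial (Fin 2) (ZMod 2))) = AddMonoidAlgebra.single 0 (MvPolynomial.X 0) from rfl, Φ_single]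
  simp [βΦ]

lemma Φ_w : Φ w = Polynomial.C (T (-1)) * Polynomial.X := by
  rw [w, show (LaurentPolynomial.C (MvPolynomial.X 1 : MvPolynomial (Fin 2) (ZMod 2))) = AddMonoidAlgebra.single 0 (MvPolynomial.X 1) from rfl, Φ_single]
  simp [βΦ]

lemma Φ_u : Φ u = Polynomial.C (T 1) := by
  rw [u, show (LaurentPolynomial.T 1 : S) = AddMonoidAlgebra.single 1 1 from rfl, Φ_single]
  simp [βΦ]

lemma Φ_uinv : Φ uinv = Polynomial.C (T (-1)) := by
  rw [uinv, show (LaurentPolynomial.T (-1) : S) = AddMonoidAlgebra.single (-1) 1 from rfl, Φ_single]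
  simp [βΦ]

lemma Tmul : (T 1 : A₀) * T (-1) = 1 := by rw [← T_add]; norm_num

lemma Φ_c : Φ c = Polynomial.X := by
  rw [c, map_mul, Φ_u, Φ_w, ← mul_assoc, ← Polynomial.C_mul, Tmul]; simp

def q : Polynomial A₀ := Polynomial.C (a' * T (-1)) * Polynomial.X + Polynomial.C (T (-1)) * Polynomial.X ^ 2

lemma Φ_b : Φ b = q := by
  have h : (T (-1) : A₀) ^ 2 * T 1 = T (-1) := by rw [T_pow, ← T_add]; norm_num
  have hC' : Polynomial.C (T (-1:ℤ) : A₀) ^ 2 * Polynomial.C (T 1 : A₀) = Polynomial.C (T (-1) : A₀) := by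
    rw [← map_pow, ← map_mul, h]
  have hC2' : Polynomial.C a' * Polynomial.C (T (-1:ℤ) : A₀) = Polynomial.C (a' * T (-1)) :=
    (map_mul _ _ _).symm
  rw [b, map_add, map_mul, map_mul, map_pow, Φ_a, Φ_u, Φ_w, q]
  calc Polynomial.C a' * (Polynomial.C (T (-1:ℤ) : A₀) * Polynomial.X)
        + Polynomial.C (T (1:ℤ) : A₀) * (Polynomial.C (T (-1:ℤ) : A₀) * Polynomial.X) ^ 2
      = (Polynomial.C a' * Polynomial.C (T (-1:ℤ) : A₀)) * Polynomial.X
        + (Polynomial.C (T (-1:ℤ) : A₀) ^ 2 * Polynomial.C (T (1:ℤ) : A₀)) * Polynomial.X ^ 2 := by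
        ring
    _ = Polynomial.C (a' * T (-1)) * Polynomial.X + Polynomial.C (T (-1) : A₀) * Polynomial.X ^ 2 := by
        rw [hC2', hC']

lemma T_ne_zero (n : ℤ) : (T n : A₀) ≠ 0 := (isUnit_T n).ne_zero

lemma natDegree_q : q.natDegree = 2 := by
  have h2 : (Polynomial.C (T (-1:ℤ) : A₀) * Polynomial.X ^ 2).natDegree = 2 := by
    rw [Polynomial.natDegree_C_mul (T_ne_zero _), Polynomial.natDegree_X_pow]
  rw [q, Polynomial.natDegree_add_eq_right_of_natDegree_lt, h2]
  rw [h2]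
  calc (Polynomial.C (a' * T (-1:ℤ) : A₀) * Polynomial.X).natDegree
      ≤ (Polynomial.X : Polynomial A₀).natDegree := Polynomial.natDegree_C_mul_le _ _
    _ < 2 := by rw [Polynomial.natDegree_X]; norm_num

lemma q_ne_C : ∀ y : A₀, q ≠ Polynomial.C y := by
  intro y hy
  have := natDegree_q
  rw [hy, Polynomial.natDegree_C] at this
  exact (by norm_num : (0:ℕ) ≠ 2) this

/-! ### The partial inverse `Ψ` -/

def γΨ : Multiplicative ℤ →* S where
  toFun n := LaurentPolynomial.T (Multiplicative.toAdd n)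
  map_one' := show (T (Multiplicative.toAdd (1 : Multiplicative ℤ)) : S) = 1 by
    rw [toAdd_one, T_zero]
  map_mul' x y := show (T (Multiplicative.toAdd (x * y)) : S) = _ by
    rw [toAdd_mul, T_add]

def βΨ : Polynomial (ZMod 2) →+* S := (Polynomial.aeval a).toRingHom

def Ψ₀ : A₀ →+* S := AddMonoidAlgebra.liftNCRingHom βΨ γΨ (fun x y => mul_comm (βΨ x) (γΨ y))

lemma Ψ₀_single (n : ℤ) (r : Polynomial (ZMod 2)) :
    Ψ₀ (AddMonoidAlgebra.single n r) = βΨ r * LaurentPolynomial.T n :=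
  by exact AddMonoidAlgebra.liftNCRingHom_single _ _ _ n r

lemma Ψ₀_a' : Ψ₀ a' = a := by
  rw [a', show (LaurentPolynomial.C (Polynomial.X : Polynomial (ZMod 2))) = AddMonoidAlgebra.single 0 Polynomial.X from rfl, Ψ₀_single]
  simp [βΨ]

lemma Ψ₀_T (n : ℤ) : Ψ₀ (T n) = T n := by
  rw [show (LaurentPolynomial.T n : A₀) = AddMonoidAlgebra.single n 1 from rfl, Ψ₀_single]
  simp [βΨ]

def Ψ : Polynomial A₀ →+* S := Polynomial.eval₂RingHom Ψ₀ c

lemma Ψ_C (y : A₀) : Ψ (Polynomial.C y) = Ψ₀ y := Polynomial.eval₂_C _ _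

/-! ### Facts about `R₀` -/

lemma mem_a : a ∈ R₀ := Algebra.subset_adjoin (by simp)
lemma mem_u : u ∈ R₀ := Algebra.subset_adjoin (by simp)

lemma zmod2_cases : ∀ z : ZMod 2, z = 0 ∨ z = 1 := by decide

lemma Φ_R₀ (r : S) (hr : r ∈ R₀) :
    Ψ (Φ r) = r ∧ ∃ y : A₀, Φ r = Polynomial.C y := by
  induction hr using Algebra.adjoin_induction with
  | mem x hx =>
    rcases hx with hx | hx | hx
    · subst hx
      exact ⟨by rw [Φ_a, Ψ_C, Ψ₀_a'], ⟨a', Φ_a⟩⟩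
    · subst hx
      refine ⟨?_, ⟨T 1, Φ_u⟩⟩
      rw [Φ_u, Ψ_C, Ψ₀_T]; rfl
    · subst hx
      refine ⟨?_, ⟨T (-1), Φ_uinv⟩⟩
      rw [Φ_uinv, Ψ_C, Ψ₀_T]; rfl
  | algebraMap z =>
    rcases zmod2_cases z with hz | hz <;> subst hz
    · exact ⟨by simp, 0, by simp⟩
    · exact ⟨by simp, 1, by simp⟩
  | add x y hx hy ihx ihy =>
    obtain ⟨h1, y1, e1⟩ := ihx
    obtain ⟨h2, y2, e2⟩ := ihy
    refine ⟨by rw [map_add, map_add, h1, h2], ⟨y1 + y2, ?_⟩⟩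
    rw [map_add, e1, e2, map_add]
  | mul x y hx hy ihx ihy =>
    obtain ⟨h1, y1, e1⟩ := ihx
    obtain ⟨h2, y2, e2⟩ := ihy
    refine ⟨by rw [map_mul, map_mul, h1, h2], ⟨y1 * y2, ?_⟩⟩
    rw [map_mul, e1, e2, map_mul]

/-- The coefficient ring hom `ρ : R₀ → A₀`. -/
def ρ : R₀ →+* A₀ :=
  ((Polynomial.evalRingHom (0 : A₀)).comp Φ).comp R₀.val.toRingHom

lemma C_ρ (r : R₀) : Polynomial.C (ρ r) = Φ (r : S) := by
  obtain ⟨_, y, hy⟩ := Φ_R₀ (r : S) r.2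
  have : ρ r = y := by
    show Polynomial.eval 0 (Φ ((R₀.val : R₀ →ₐ[ZMod 2] S) r)) = y
    rw [show ((R₀.val : R₀ →ₐ[ZMod 2] S) r) = (r : S) from rfl, hy, Polynomial.eval_C]
  rw [this, hy]

lemma ρ_inj : Function.Injective ρ := by
  intro r s h
  have hC : Φ (r : S) = Φ (s : S) := by rw [← C_ρ, ← C_ρ, h]
  have := congrArg Ψ hC
  rw [(Φ_R₀ (r : S) r.2).1, (Φ_R₀ (s : S) s.2).1] at this
  exact Subtype.ext this

lemma algebraMap_R₀ (r : R₀) : algebraMap R₀ S r = (r : S) := by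
  rw [Subalgebra.algebraMap_eq]; rfl

lemma Φ_aeval (f : Polynomial R₀) : Φ (Polynomial.aeval b f) = (f.map ρ).comp q := by
  rw [Polynomial.aeval_def, Polynomial.hom_eval₂, Φ_b]
  have hcomp : Φ.comp (algebraMap R₀ S) = (Polynomial.C : A₀ →+* Polynomial A₀).comp ρ := by
    refine RingHom.ext fun r => ?_
    show Φ (algebraMap R₀ S r) = Polynomial.C (ρ r)
    rw [algebraMap_R₀, C_ρ]
  rw [hcomp, show (f.map ρ).comp q = Polynomial.eval₂ Polynomial.C q (f.map ρ) from rfl,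
    Polynomial.eval₂_map]

/-! ### Core degree-parity lemma -/

lemma comp_q_eq_zero {H : Polynomial A₀} (hH : H.comp q = 0) : H = 0 := by
  rcases Polynomial.comp_eq_zero_iff.mp hH with h1 | ⟨_, h2⟩
  · exact h1
  · exact absurd h2 (q_ne_C _)

lemma core (F G : Polynomial A₀) (h : F.comp q + Polynomial.X * G.comp q = 0) :
    F = 0 ∧ G = 0 := by
  by_cases hF : F = 0
  · subst hF
    rw [Polynomial.zero_comp, zero_add] at h
    rcases mul_eq_zero.mp h with hX | hG
    · exact absurd hX Polynomial.X_ne_zero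
    · exact ⟨rfl, comp_q_eq_zero hG⟩
  by_cases hG : G = 0
  · subst hG
    rw [Polynomial.zero_comp, mul_zero, add_zero] at h
    exact absurd (comp_q_eq_zero h) hF
  exfalso
  have hFc : F.comp q ≠ 0 := fun hc => hF (comp_q_eq_zero hc)
  have hGc : G.comp q ≠ 0 := fun hc => hG (comp_q_eq_zero hc)
  have h1 : F.comp q = -(Polynomial.X * G.comp q) := eq_neg_of_add_eq_zero_left (G := Polynomial A₀) h
  have hdeg := congrArg Polynomial.natDegree h1
  rw [Polynomial.natDegree_neg, Polynomial.natDegree_comp, natDegree_q,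
    Polynomial.natDegree_mul Polynomial.X_ne_zero hGc, Polynomial.natDegree_X,
    Polynomial.natDegree_comp, natDegree_q] at hdeg
  omega

/-! ### Representation lemmas -/

lemma rep_inj (f1 g1 f2 g2 : Polynomial R₀)
    (h : Polynomial.aeval b f1 + c * Polynomial.aeval b g1
       = Polynomial.aeval b f2 + c * Polynomial.aeval b g2) : f1 = f2 ∧ g1 = g2 := by
  have hΦ := congrArg Φ h
  rw [map_add, map_add, map_mul, map_mul, Φ_c, Φ_aeval, Φ_aeval, Φ_aeval, Φ_aeval] at hΦ
  have h0 : (f1.map ρ - f2.map ρ).comp q + Polynomial.X * (g1.map ρ - g2.map ρ).comp q = 0 := by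
    rw [Polynomial.sub_comp, Polynomial.sub_comp]
    calc ((f1.map ρ).comp q - (f2.map ρ).comp q)
          + Polynomial.X * ((g1.map ρ).comp q - (g2.map ρ).comp q)
        = ((f1.map ρ).comp q + Polynomial.X * (g1.map ρ).comp q)
          - ((f2.map ρ).comp q + Polynomial.X * (g2.map ρ).comp q) := by ring
      _ = 0 := by
        rw [hΦ]
        exact sub_self ((f2.map ρ).comp q + Polynomial.X * (g2.map ρ).comp q)
  obtain ⟨hf, hg⟩ := core _ _ h0
  exact ⟨Polynomial.map_injective ρ ρ_inj (sub_eq_zero.mp hf),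
    Polynomial.map_injective ρ ρ_inj (sub_eq_zero.mp hg)⟩

lemma h2S : (2 : S) = 0 := by
  have h0 : (2 : ZMod 2) = 0 := by decide
  have : (2 : S) = LaurentPolynomial.C (MvPolynomial.C (2 : ZMod 2)) := by
    rw [map_ofNat, map_ofNat]
  rw [this, h0, map_zero, map_zero]

lemma hrel : c ^ 2 = a * c + u * b := by
  have h : a * c + u * b = 2 * (a * u * w) + u ^ 2 * w ^ 2 := by rw [c, b]; ring
  rw [h, h2S, c]; ring

lemma exists_rep (x : S) (hx : x ∈ Algebra.adjoin R₀ ({c, b} : Set S)) :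
    ∃ fg : Polynomial R₀ × Polynomial R₀,
      x = Polynomial.aeval b fg.1 + c * Polynomial.aeval b fg.2 := by
  induction hx using Algebra.adjoin_induction with
  | mem x hx =>
    rcases hx with hx | hx
    · exact ⟨(0, 1), by subst hx; simp⟩
    · exact ⟨(Polynomial.X, 0), by rw [Set.mem_singleton_iff] at hx; subst hx; simp⟩
  | algebraMap r =>
    exact ⟨(Polynomial.C r, 0), by simp⟩
  | add x y hx hy ihx ihy =>
    obtain ⟨⟨f1, g1⟩, e1⟩ := ihx
    obtain ⟨⟨f2, g2⟩, e2⟩ := ihy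
    refine ⟨(f1 + f2, g1 + g2), ?_⟩
    simp only [map_add] at *
    rw [e1, e2]; ring
  | mul x y hx hy ihx ihy =>
    obtain ⟨⟨f1, g1⟩, e1⟩ := ihx
    obtain ⟨⟨f2, g2⟩, e2⟩ := ihy
    set aa : R₀ := ⟨a, mem_a⟩
    set uu : R₀ := ⟨u, mem_u⟩
    refine ⟨(f1 * f2 + (Polynomial.C uu * Polynomial.X) * (g1 * g2),
             Polynomial.C aa * (g1 * g2) + f1 * g2 + g1 * f2), ?_⟩
    have haC : Polynomial.aeval b (Polynomial.C aa) = a := by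
      rw [Polynomial.aeval_C, algebraMap_R₀]
    have huC : Polynomial.aeval b (Polynomial.C uu) = u := by
      rw [Polynomial.aeval_C, algebraMap_R₀]
    set F1 := Polynomial.aeval b f1
    set F2 := Polynomial.aeval b f2
    set G1 := Polynomial.aeval b g1
    set G2 := Polynomial.aeval b g2
    have expand : Polynomial.aeval b (f1 * f2 + (Polynomial.C uu * Polynomial.X) * (g1 * g2))
        + c * Polynomial.aeval b (Polynomial.C aa * (g1 * g2) + f1 * g2 + g1 * f2)
        = (F1 * F2 + u * b * (G1 * G2)) + c * (a * (G1 * G2) + F1 * G2 + G1 * F2) := by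
      simp only [map_add, map_mul, Polynomial.aeval_X, haC, huC]
      rfl
    rw [e1, e2, expand]
    calc (F1 + c * G1) * (F2 + c * G2)
        = F1 * F2 + c * (F1 * G2 + G1 * F2) + c ^ 2 * (G1 * G2) := by ring
      _ = F1 * F2 + c * (F1 * G2 + G1 * F2) + (a * c + u * b) * (G1 * G2) := by rw [hrel]
      _ = (F1 * F2 + u * b * (G1 * G2)) + c * (a * (G1 * G2) + F1 * G2 + G1 * F2) := by ring

/-- `c = u·w` and `b = a·w + u·w²` satisfy `c² = a·c + u·b`, and every element of the
`𝔽₂[a,u,u⁻¹]`-subalgebra generated by `c` and `b` is uniquely of the form `f(b) + c·g(b)`. -/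
theorem relation_and_unique_rep :
    c ^ 2 = a * c + u * b ∧
    ∀ x ∈ Algebra.adjoin R₀ ({c, b} : Set S),
      ∃! fg : Polynomial R₀ × Polynomial R₀,
        x = Polynomial.aeval b fg.1 + c * Polynomial.aeval b fg.2 := by
  refine ⟨hrel, fun x hx => ?_⟩
  obtain ⟨fg, hfg⟩ := exists_rep x hx
  refine ⟨fg, hfg, ?_⟩
  intro y hy
  have e : Polynomial.aeval b y.1 + c * Polynomial.aeval b y.2
      = Polynomial.aeval b fg.1 + c * Polynomial.aeval b fg.2 := hy.symm.trans hfg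
  obtain ⟨h1, h2⟩ := rep_inj y.1 y.2 fg.1 fg.2 e
  exact Prod.ext h1 h2

end Stmt5

end
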